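/- The correspondences I ↦ F_I (a proper ideal of R^Λ to the filter of zero sets of its elements) and F ↦ I_F (a proper filter on Λ to the ideal of functions whose zero set belongs to F) are mutually inverse order-preserving bijections between the proper ideals of R^Λ and the proper filters on Λ. -/

import Mathlib

open Set Filter Function

/-- zero set of a function -/
def Z {Λ : Type*} (x : Λ → ℝ) : Set Λ := {l | x l = 0}

/-- the ideal of R^Λ associated to a filter. -/
def Ifil {Λ : Type*} (F : Filter Λ) : Ideal (Λ → ℝ) where
  carrier := {x | Z x ∈ F}
  add_mem' := by
    intro a b ha hb
    refine Filter.mem_of_superset (Filter.inter_mem ha hb) ?_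
    rintro l ⟨h1, h2⟩
    simp only [Z, Set.mem_setOf_eq] at *
    simp [h1, h2]
  zero_mem' := by
    have : Z (0 : Λ → ℝ) = Set.univ := by ext l; simp [Z]
    simp [Set.mem_setOf_eq, this]
  smul_mem' := by
    intro c x hx
    refine Filter.mem_of_superset hx ?_
    intro l hl
    simp only [Z, Set.mem_setOf_eq] at *
    simp [hl]


/-- the collection of zero sets of elements of an ideal of R^Λ -/
def Fof {Λ : Type*} (I : Ideal (Λ → ℝ)) : Set (Set Λ) := {s | ∃ x ∈ I, s = Z x}

section Helpers
variable {Λ : Type*}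

lemma Z_superset_mem (I : Ideal (Λ → ℝ)) {x : Λ → ℝ} (hx : x ∈ I) {s : Set Λ}
    (hs : Z x ⊆ s) : ∃ y ∈ I, s = Z y := by
  refine ⟨x * Set.indicator sᶜ 1, I.mul_mem_right _ hx, ?_⟩
  ext l
  by_cases hl : l ∈ s
  · simp [Z, Set.indicator_of_notMem, hl]
  · have hxl : x l ≠ 0 := fun h => hl (hs h)
    simp [Z, Set.indicator_of_mem, hl, hxl]

lemma Z_empty_top {I : Ideal (Λ → ℝ)} {x : Λ → ℝ} (hx : x ∈ I) (h : Z x = ∅) :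
    I = ⊤ := by
  rw [Ideal.eq_top_iff_one]
  have : x * (fun l => (x l)⁻¹) = 1 := by
    funext l
    have hxl : x l ≠ 0 := fun h0 => (Set.eq_empty_iff_forall_notMem.mp h l) h0
    simp [mul_inv_cancel₀ hxl]
  exact this ▸ I.mul_mem_right _ hx

lemma Fof_filter (I : Ideal (Λ → ℝ)) : ∃ F : Filter Λ, F.sets = Fof I := by
  refine ⟨⟨Fof I, ⟨0, I.zero_mem, by ext l; simp [Z]⟩, ?_, ?_⟩, rfl⟩
  · rintro s t ⟨x, hx, rfl⟩ hsub
    exact Z_superset_mem I hx hsub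
  · rintro s t ⟨x, hx, rfl⟩ ⟨y, hy, rfl⟩
    refine ⟨x * x + y * y, I.add_mem (I.mul_mem_right _ hx) (I.mul_mem_right _ hy), ?_⟩
    ext l
    simp only [Z, Set.mem_inter_iff, Set.mem_setOf_eq, Pi.add_apply, Pi.mul_apply]
    constructor
    · rintro ⟨h1, h2⟩; simp [h1, h2]
    · intro h
      have h1 := (add_eq_zero_iff_of_nonneg (mul_self_nonneg _) (mul_self_nonneg _)).mp h
      exact ⟨mul_self_eq_zero.mp h1.1, mul_self_eq_zero.mp h1.2⟩

end Helpers

/-- The correspondences I ↦ F_I and F ↦ I_F are mutually inverse order-preserving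
bijections between proper ideals of R^Λ and proper filters on Λ: each proper ideal
gives a proper filter, each proper filter gives a proper ideal, both maps preserve
inclusion, and they are mutually inverse. -/
theorem stmt5 {Λ : Type*} :
    (∀ I : Ideal (Λ → ℝ), I ≠ ⊤ → ∃ F : Filter Λ, (∅ : Set Λ) ∉ F ∧ F.sets = Fof I) ∧
    (∀ F : Filter Λ, (∅ : Set Λ) ∉ F → Ifil F ≠ ⊤) ∧
    (∀ I J : Ideal (Λ → ℝ), I ≠ ⊤ → J ≠ ⊤ →
      ((I : Set (Λ → ℝ)) ⊆ J → Fof I ⊆ Fof J)) ∧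
    (∀ F G : Filter Λ, (∅ : Set Λ) ∉ F → (∅ : Set Λ) ∉ G → F.sets ⊆ G.sets →
      ((Ifil F : Ideal (Λ → ℝ)) : Set (Λ → ℝ)) ⊆ (Ifil G : Ideal (Λ → ℝ))) ∧
    (∀ I : Ideal (Λ → ℝ), I ≠ ⊤ → {y : Λ → ℝ | Z y ∈ Fof I} = (I : Set (Λ → ℝ))) ∧
    (∀ F : Filter Λ, (∅ : Set Λ) ∉ F → Fof (Ifil F) = F.sets) := by
  constructor
  · intro I hI
    obtain ⟨F, hF⟩ := Fof_filter I
    refine ⟨F, ?_, hF⟩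
    intro hmem
    have hmem' : (∅ : Set Λ) ∈ F.sets := hmem
    rw [hF] at hmem'
    obtain ⟨x, hx, hZ⟩ := hmem'
    exact hI (Z_empty_top hx hZ.symm)
  refine ⟨?_, ?_, ?_, ?_, ?_⟩
  · intro F hF htop
    have h1 : (1 : Λ → ℝ) ∈ Ifil F := htop ▸ Submodule.mem_top
    have : Z (1 : Λ → ℝ) = ∅ := by ext l; simp [Z]
    exact hF (this ▸ h1)
  · rintro I J _ _ hIJ s ⟨x, hx, rfl⟩
    exact ⟨x, hIJ hx, rfl⟩
  · intro F G _ _ hFG x hx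
    exact hFG hx
  · intro I hI
    ext y
    simp only [Set.mem_setOf_eq, SetLike.mem_coe]
    constructor
    · rintro ⟨x, hx, hZ⟩
      have : y = x * (fun l => if x l = 0 then 0 else y l / (x l)) := by
        funext l
        by_cases h : x l = 0
        · have : y l = 0 := by
            have : l ∈ Z y := hZ ▸ h
            exact this
          simp [h, this]
        · simp only [Pi.mul_apply, h, if_false]
          field_simp [h]
      rw [this]
      exact I.mul_mem_right _ hx
    · intro hy
      exact ⟨y, hy, rfl⟩
  · intro F hF
    ext s
    constructor
    · rintro ⟨x, hx, rfl⟩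
      exact hx
    · intro hs
      have hZ : Z (Set.indicator sᶜ (1 : Λ → ℝ)) = s := by
        ext l
        by_cases hl : l ∈ s <;> simp [Z, hl]
      refine ⟨Set.indicator sᶜ 1, ?_, hZ.symm⟩
      show Z _ ∈ F
      rw [hZ]; exact hs
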